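/- Regular expression test: suppose G0 → G. Then for every regular expression e over the alphabet {1,2}, if G0 contains a slice p with word(p) in the language of e, then G contains a slice p' with word(p') in the language of e. -/

import Mathlib

universe u v w

/-- A (pre)graph: a node set `V` inside an ambient type, two edge relations
`s1` and `s2`, and distinguished constants `null` and `root`. -/
structure PreGraph (α : Type u) where
  V : Set α
  s1 : α → α → Prop
  s2 : α → α → Prop
  null : α
  root : α

namespace PreGraph

/-- `G` is a graph: `V` is finite, `root` and `null` are distinct nodes of `V`,
edges lie within `V`, and `⟨null, x⟩ ∈ sᵢ` iff `x = null`. -/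
def IsGraph {α : Type u} (G : PreGraph α) : Prop :=
  G.V.Finite ∧
  G.null ∈ G.V ∧ G.root ∈ G.V ∧ G.root ≠ G.null ∧
  (∀ x y, G.s1 x y → x ∈ G.V ∧ y ∈ G.V) ∧
  (∀ x y, G.s2 x y → x ∈ G.V ∧ y ∈ G.V) ∧
  (∀ x, G.s1 G.null x ↔ x = G.null) ∧
  (∀ x, G.s2 G.null x ↔ x = G.null)

/-- `h` is a homomorphism from `G` to `G'`. -/
def IsHom {α : Type u} {β : Type v} (G : PreGraph α) (G' : PreGraph β) (h : α → β) : Prop :=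
  (∀ x ∈ G.V, h x ∈ G'.V) ∧
  (∀ x y, G.s1 x y → G'.s1 (h x) (h y)) ∧
  (∀ x y, G.s2 x y → G'.s2 (h x) (h y)) ∧
  (∀ x ∈ G.V, (h x = G'.root ↔ x = G.root)) ∧
  (∀ x ∈ G.V, (h x = G'.null ↔ x = G.null))

/-- `G → G'` : there exists a homomorphism from `G` to `G'`. -/
def Maps {α : Type u} {β : Type v} (G : PreGraph α) (G' : PreGraph β) : Prop :=
  ∃ h : α → β, IsHom G G' h

/-- An edge of `G` (either an `s1`- or an `s2`-edge). -/
def edge {α : Type u} (G : PreGraph α) (x y : α) : Prop := G.s1 x y ∨ G.s2 x y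

/-- `G` is a heap: a graph in which `s1` and `s2` are total functions on `V`
and every node other than `null` is reachable from `root`. -/
def IsHeap {α : Type u} (G : PreGraph α) : Prop :=
  IsGraph G ∧
  (∀ x ∈ G.V, ∃! y, G.s1 x y) ∧
  (∀ x ∈ G.V, ∃! y, G.s2 x y) ∧
  (∀ x ∈ G.V, x ≠ G.null → Relation.ReflTransGen G.edge G.root x)

end PreGraph

/-- A path in `G` starting at `x`, given as a list of (label, next node) steps,
with labels in `{1, 2}`; all nodes lie in `V` and consecutive nodes are joined
by an edge of the corresponding relation. -/
def IsPath {α : Type u} (G : PreGraph α) : α → List (ℕ × α) → Prop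
  | x, [] => x ∈ G.V
  | x, (l, y) :: rest =>
      x ∈ G.V ∧ ((l = 1 ∧ G.s1 x y) ∨ (l = 2 ∧ G.s2 x y)) ∧ IsPath G y rest

/-- The terminal node of a path starting at `x` with steps `p`. -/
def pathEnd {α : Type u} (x : α) (p : List (ℕ × α)) : α :=
  p.foldl (fun _ s => s.2) x

/-- The word of labels of a path. -/
def word {α : Type u} (p : List (ℕ × α)) : List ℕ := p.map Prod.fst

/-- A slice is a path starting at `root` and terminating at `null`. -/
def IsSlice {α : Type u} (G : PreGraph α) (x : α) (p : List (ℕ × α)) : Prop :=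
  IsPath G x p ∧ x = G.root ∧ pathEnd x p = G.null

/-- The image of a path under a map `h` on nodes. -/
def mapPath {α : Type u} {β : Type v} (h : α → β) (p : List (ℕ × α)) :
    List (ℕ × β) :=
  p.map fun s => (s.1, h s.2)

lemma isPath_map {α β : Type} {G0 : PreGraph α} {G : PreGraph β} {h : α → β}
    (hh : PreGraph.IsHom G0 G h) :
    ∀ (x : α) (p : List (ℕ × α)), IsPath G0 x p → IsPath G (h x) (mapPath h p) := by
  intro x p
  induction p generalizing x with
  | nil => intro hp; exact hh.1 x hp
  | cons s rest ih =>
    rintro ⟨hx, hstep, hrest⟩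
    refine ⟨hh.1 x hx, ?_, ih s.2 hrest⟩
    rcases hstep with ⟨hl, he⟩ | ⟨hl, he⟩
    · exact Or.inl ⟨hl, hh.2.1 _ _ he⟩
    · exact Or.inr ⟨hl, hh.2.2.1 _ _ he⟩

lemma pathEnd_map {α β : Type} (h : α → β) (x : α) (p : List (ℕ × α)) :
    pathEnd (h x) (mapPath h p) = h (pathEnd x p) := by
  induction p generalizing x with
  | nil => rfl
  | cons s rest ih => exact ih s.2

lemma pathEnd_mem {α : Type} {G0 : PreGraph α} :
    ∀ (x : α) (p : List (ℕ × α)), IsPath G0 x p → pathEnd x p ∈ G0.V := by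
  intro x p
  induction p generalizing x with
  | nil => intro hp; exact hp
  | cons s rest ih => rintro ⟨_, _, hrest⟩; exact ih s.2 hrest

/-- Regular expression test: if `G0 → G` and `e` is a regular expression over
the alphabet `{1, 2}` such that `G0` contains a slice whose word matches `e`,
then `G` contains a slice whose word matches `e`. -/
theorem regular_expression_test {α β : Type} (G0 : PreGraph α) (G : PreGraph β)
    (hmaps : PreGraph.Maps G0 G) (e : RegularExpression ℕ)
    (x : α) (p : List (ℕ × α)) (hs : IsSlice G0 x p)
    (hw : word p ∈ e.matches') :
    ∃ (y : β) (q : List (ℕ × β)), IsSlice G y q ∧ word q ∈ e.matches' := by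
  obtain ⟨h, hh⟩ := hmaps
  obtain ⟨hp, hroot, hend⟩ := hs
  have hxV : x ∈ G0.V := by cases p with
    | nil => exact hp
    | cons s rest => exact hp.1
  refine ⟨h x, mapPath h p, ⟨isPath_map hh x p hp, ?_, ?_⟩, ?_⟩
  · exact (hh.2.2.2.1 x hxV).mpr hroot
  · rw [pathEnd_map]
    exact (hh.2.2.2.2 _ (pathEnd_mem x p hp)).mpr hend
  · simpa [word, mapPath, List.map_map, Function.comp_def] using hw
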